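/- For every real number b with 0 < b < 1, the quadratic expression 9π²b² − (256 + 6π²)b + 21π² − 256 is negative. -/

import Mathlib

open Real

theorem quadratic_neg (b : ℝ) (hb0 : 0 < b) (hb1 : b < 1) :
    9 * π ^ 2 * b ^ 2 - (256 + 6 * π ^ 2) * b + 21 * π ^ 2 - 256 < 0 := by
  have h1 : π < 3.15 := pi_lt_d2
  have h2 : (0:ℝ) < π := pi_pos
  nlinarith [sq_nonneg b, sq_nonneg (1-b), mul_pos hb0 (sub_pos.mpr hb1), sq_nonneg π, mul_pos h2 h2]
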